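/- For every p > 1 and all real a, b, the quantity K(a,b) = (b-a)^2·(max(|a|,|b|))^{p-2} satisfies K(min(a,1), min(b,1)) ≤ K(a,b) and K(max(a,-1), max(b,-1)) ≤ K(a,b). -/

import Mathlib

noncomputable def K (p a b : ℝ) : ℝ := (b - a) ^ 2 * (max |a| |b|) ^ (p - 2)

lemma K_mono (p a b c d : ℝ) (hp : 1 < p)
    (h1 : (d - c) ^ 2 ≤ (b - a) ^ 2)
    (h2 : max |c| |d| ≤ max |a| |b|)
    (h3 : (d - c) ^ 2 * max |a| |b| ≤ (b - a) ^ 2 * max |c| |d|) :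
    K p c d ≤ K p a b := by
  set M := max |a| |b| with hMdef
  set m := max |c| |d| with hmdef
  have hM0 : 0 ≤ M := le_trans (abs_nonneg a) (le_max_left _ _)
  have hm0 : 0 ≤ m := le_trans (abs_nonneg c) (le_max_left _ _)
  unfold K
  rcases le_or_gt 2 p with hp2 | hp2
  · exact mul_le_mul h1 (Real.rpow_le_rpow hm0 h2 (by linarith)) (Real.rpow_nonneg hm0 _)
      (sq_nonneg _)
  · rcases eq_or_lt_of_le hM0 with hM | hM
    · have ha : |a| = 0 := le_antisymm (by rw [hM]; exact le_max_left _ _) (abs_nonneg a)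
      have hb : |b| = 0 := le_antisymm (by rw [hM]; exact le_max_right _ _) (abs_nonneg b)
      have hm : (0:ℝ) = m := le_antisymm hm0 (hM ▸ h2)
      have hc : |c| = 0 := le_antisymm (by rw [hm]; exact le_max_left _ _) (abs_nonneg c)
      have hd : |d| = 0 := le_antisymm (by rw [hm]; exact le_max_right _ _) (abs_nonneg d)
      rw [abs_eq_zero.mp ha, abs_eq_zero.mp hb, abs_eq_zero.mp hc, abs_eq_zero.mp hd]
    · rcases eq_or_lt_of_le hm0 with hm | hm
      · have hc : |c| = 0 := le_antisymm (by rw [hm]; exact le_max_left _ _) (abs_nonneg c)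
        have hd : |d| = 0 := le_antisymm (by rw [hm]; exact le_max_right _ _) (abs_nonneg d)
        rw [abs_eq_zero.mp hc, abs_eq_zero.mp hd, sub_self]
        have hnn : (0:ℝ) ≤ (b - a) ^ 2 * M ^ (p - 2) :=
          mul_nonneg (sq_nonneg _) (Real.rpow_nonneg hM0 _)
        simpa using hnn
      · -- main case: 1 < p < 2, 0 < m ≤ M
        have hexp : p - 2 = -(2 - p) := by ring
        rw [hexp, Real.rpow_neg hm0, Real.rpow_neg hM0, ← div_eq_mul_inv, ← div_eq_mul_inv,
          div_le_div_iff₀ (Real.rpow_pos_of_pos hm _) (Real.rpow_pos_of_pos hM _)]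
        -- goal : (d - c)^2 * M^(2-p) ≤ (b - a)^2 * m^(2-p)
        set θ := 2 - p with hθdef
        have hθ0 : 0 < θ := by simp [hθdef]; linarith
        have hθ1 : θ ≤ 1 := by simp [hθdef]; linarith
        set r := m / M with hrdef
        have hr0 : 0 < r := div_pos hm hM
        have hr1 : r ≤ 1 := (div_le_one hM).mpr h2
        have hmr : m = r * M := by rw [hrdef, div_mul_cancel₀ _ hM.ne']
        rw [hmr, Real.mul_rpow hr0.le hM0]
        have key : (d - c) ^ 2 ≤ (b - a) ^ 2 * r := by
          rw [hrdef, mul_div_assoc'] at *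
          exact (le_div_iff₀ hM).mpr h3
        have hrθ : r ≤ r ^ θ := by
          calc r = r ^ (1 : ℝ) := (Real.rpow_one r).symm
          _ ≤ r ^ θ := Real.rpow_le_rpow_of_exponent_ge hr0 hr1 hθ1
        have : (d - c) ^ 2 ≤ (b - a) ^ 2 * r ^ θ :=
          key.trans (mul_le_mul_of_nonneg_left hrθ (sq_nonneg _))
        calc (d - c) ^ 2 * M ^ θ ≤ ((b - a) ^ 2 * r ^ θ) * M ^ θ :=
              mul_le_mul_of_nonneg_right this (Real.rpow_nonneg hM0 _)
          _ = (b - a) ^ 2 * (r ^ θ * M ^ θ) := by ring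

lemma abs_min_one_le (a : ℝ) : |min a 1| ≤ |a| := by
  rcases le_total a 1 with h | h
  · rw [min_eq_left h]
  · rw [min_eq_right h, abs_one]
    exact le_trans h (le_abs_self a)

lemma lip_min (a b : ℝ) : (min b 1 - min a 1) ^ 2 ≤ (b - a) ^ 2 := by
  rcases le_total a 1 with ha | ha <;> rcases le_total b 1 with hb | hb
  · rw [min_eq_left ha, min_eq_left hb]
  · rw [min_eq_left ha, min_eq_right hb]
    nlinarith [mul_nonneg (by linarith : (0:ℝ) ≤ b - 1) (by linarith : (0:ℝ) ≤ b + 1 - 2 * a)]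
  · rw [min_eq_right ha, min_eq_left hb]
    nlinarith [mul_nonneg (by linarith : (0:ℝ) ≤ a - 1) (by linarith : (0:ℝ) ≤ a + 1 - 2 * b)]
  · rw [min_eq_right ha, min_eq_right hb]
    nlinarith [sq_nonneg (b - a)]

lemma h3_aux (a b : ℝ) (ha : a ≤ 1) (hb : 1 ≤ b) :
    (min b 1 - min a 1) ^ 2 * max |a| |b| ≤ (b - a) ^ 2 * max |min a 1| |min b 1| := by
  rw [min_eq_left ha, min_eq_right hb]
  have hb' : |b| = b := abs_of_nonneg (by linarith)
  rw [hb', abs_one]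
  rcases le_total |a| 1 with h | h
  · rw [max_eq_right h, max_eq_right (le_trans h hb)]
    have h1 := abs_le.mp h
    nlinarith [mul_nonneg (sub_nonneg.mpr hb) (by nlinarith : (0:ℝ) ≤ b - a ^ 2)]
  · rw [max_eq_left h]
    rcases le_or_gt 0 a with ha0 | ha0
    · have : a = 1 := le_antisymm ha (by rwa [abs_of_nonneg ha0] at h)
      rw [this]
      simp
      positivity
    · have ha1 : a ≤ -1 := by rw [abs_of_neg ha0] at h; linarith
      rcases le_total b (-a) with hba | hba
      · rw [max_eq_left (by rwa [abs_of_neg ha0])]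
        apply mul_le_mul_of_nonneg_right _ (abs_nonneg a)
        nlinarith
      · rw [max_eq_right (by rwa [abs_of_neg ha0]), abs_of_neg ha0]
        nlinarith [mul_nonneg (by linarith : (0:ℝ) ≤ b + a) (by linarith : (0:ℝ) ≤ -a - 1),
          mul_nonneg (mul_nonneg (by linarith : (0:ℝ) ≤ b + a) (by linarith : (0:ℝ) ≤ -a - 1))
            (by linarith : (0:ℝ) ≤ -a), sq_nonneg (b + a), sq_nonneg (a + 1)]

lemma h3_min (a b : ℝ) :
    (min b 1 - min a 1) ^ 2 * max |a| |b| ≤ (b - a) ^ 2 * max |min a 1| |min b 1| := by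
  rcases le_total a 1 with ha | ha
  · rcases le_total b 1 with hb | hb
    · rw [min_eq_left ha, min_eq_left hb]
    · exact h3_aux a b ha hb
  · rcases le_total b 1 with hb | hb
    · rw [show (min b 1 - min a 1) ^ 2 = (min a 1 - min b 1) ^ 2 by ring,
        show (b - a) ^ 2 = (a - b) ^ 2 by ring, max_comm |a| |b|, max_comm |min a 1| |min b 1|]
      exact h3_aux b a hb ha
    · rw [min_eq_right ha, min_eq_right hb]
      simp
      positivity

lemma K_min (p : ℝ) (hp : 1 < p) (a b : ℝ) : K p (min a 1) (min b 1) ≤ K p a b := by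
  apply K_mono p a b _ _ hp (lip_min a b) _ (h3_min a b)
  exact max_le (le_trans (abs_min_one_le a) (le_max_left _ _))
    (le_trans (abs_min_one_le b) (le_max_right _ _))

lemma K_neg (p x y : ℝ) : K p (-x) (-y) = K p x y := by
  unfold K
  rw [abs_neg, abs_neg]
  ring_nf

theorem K_contraction (p : ℝ) (hp : 1 < p) (a b : ℝ) :
    K p (min a 1) (min b 1) ≤ K p a b ∧
    K p (max a (-1)) (max b (-1)) ≤ K p a b := by
  refine ⟨K_min p hp a b, ?_⟩
  have h1 : max a (-1) = -(min (-a) 1) := by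
    rw [show (1:ℝ) = -(-1) by norm_num, min_neg_neg, neg_neg, neg_neg]
  have h2 : max b (-1) = -(min (-b) 1) := by
    rw [show (1:ℝ) = -(-1) by norm_num, min_neg_neg, neg_neg, neg_neg]
  rw [h1, h2, K_neg]
  calc K p (min (-a) 1) (min (-b) 1) ≤ K p (-a) (-b) := K_min p hp (-a) (-b)
    _ = K p a b := K_neg p a b
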